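/- Let G be a countable locally finite graph with an independent random environment μ = ⊗_x μ_x, where μ_x is a probability measure on T_{d(x)}. Then the annealed law P_{x_0} of the random walk in this environment satisfies: for any trajectory history, P_{x_0}(X_{n+1} = e(x,i) | X_n = x, past) = E_{μ_x}[ω(x,i) ∏_j ω(x,j)^{N_j(x)}] / E_{μ_x}[∏_j ω(x,j)^{N_j(x)}], where N_j(x) is the number of previous traversals of the oriented edge (x, e(x,j)). In particular, the annealed law coincides with the law of the edge-oriented reinforced random walk with reinforcement V_i(x,p) = E_{μ_x}[ω(x,i) ω(x)^p]/E_{μ_x}[ω(x)^p]. -/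

import Mathlib

open MeasureTheory Finset
open scoped Classical

/-- Let `G` be a countable locally finite graph with vertex set `Vtx`,
where vertex `x` has `d x` neighbours `e x 0, …, e x (d x - 1)`.  Let `μ` be the law of
an environment `ω : Vtx → ℕ → ℝ` in which the variables `(ω x)_{x}` are independent, the
marginal at `x` is `μx x`, and a.s. `ω x ∈ T_{d x}`.  Consider a fixed trajectory
`v 0, v 1, …` with exits `s l < d (v l)`, `v (l+1) = e (v l) (s l)`.  Then the annealed
probability `A n = ∫ ∏_{l<n} ω (v l) (s l) dμ` of the path satisfies
`A (n+1) / A n = E_{μx x}[ρ (s n) ∏ⱼ ρ j ^ {Nⱼ}] / E_{μx x}[∏ⱼ ρ j ^ {Nⱼ}]` with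
`x = v n` and `Nⱼ` the number of previous traversals of the oriented edge `(x, e x j)`;
i.e. the annealed law is the edge-oriented reinforced walk with reinforcement
`V i (x, p) = E_{μx x}[ω(x,i) ω(x)^p] / E_{μx x}[ω(x)^p]`. -/
theorem stmt_13 (Vtx : Type*) [Countable Vtx] [MeasurableSpace Vtx]
    (d : Vtx → ℕ) (hd : ∀ x, 0 < d x) (e : Vtx → ℕ → Vtx)
    (μ : Measure (Vtx → ℕ → ℝ)) [IsProbabilityMeasure μ]
    (hindep : ProbabilityTheory.iIndepFun
      (fun x (ω : Vtx → ℕ → ℝ) => ω x) μ)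
    (μx : Vtx → Measure (ℕ → ℝ))
    (hμx : ∀ x, μx x = μ.map (fun ω => ω x))
    (hsupp : ∀ᵐ ω ∂μ, ∀ x, (∀ j < d x, 0 < ω x j ∧ ω x j ≤ 1) ∧
      ∑ j ∈ range (d x), ω x j = 1)
    (v : ℕ → Vtx) (s : ℕ → ℕ)
    (hs : ∀ l, s l < d (v l)) (hv : ∀ l, v (l + 1) = e (v l) (s l)) :
    ∀ n : ℕ,
      (∫ ω, ∏ l ∈ range (n + 1), ω (v l) (s l) ∂μ) /
        (∫ ω, ∏ l ∈ range n, ω (v l) (s l) ∂μ) =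
      (∫ ρ, ρ (s n) * ∏ j ∈ range (d (v n)),
          ρ j ^ ((range n).filter (fun l => v l = v n ∧ s l = j)).card ∂(μx (v n))) /
        (∫ ρ, ∏ j ∈ range (d (v n)),
          ρ j ^ ((range n).filter (fun l => v l = v n ∧ s l = j)).card ∂(μx (v n))) := by
  intro n
  set x := v n with hx
  -- a.e. bounds on the individual factors
  have hae : ∀ᵐ ω ∂μ, ∀ l : ℕ, 0 < ω (v l) (s l) ∧ ω (v l) (s l) ≤ 1 := by
    filter_upwards [hsupp] with ω h l
    exact (h (v l)).1 (s l) (hs l)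
  -- the fiber products
  set g1 : Vtx → (ℕ → ℝ) → ℝ :=
    fun y ρ => ∏ l ∈ (range n).filter (fun l => v l = y), ρ (s l) with hg1
  set g2 : Vtx → (ℕ → ℝ) → ℝ :=
    fun y ρ => if y = x then ρ (s n) * g1 y ρ else g1 y ρ with hg2
  have hm1 : ∀ y, Measurable (g1 y) := fun y =>
    Finset.measurable_prod _ (fun l _ => measurable_pi_apply (s l))
  have hm2 : ∀ y, Measurable (g2 y) := by
    intro y
    rw [hg2]
    dsimp only
    split_ifs
    · exact (measurable_pi_apply (s n)).mul (hm1 y)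
    · exact hm1 y
  -- the visited vertices
  set T : Finset Vtx := (range (n + 1)).image v with hT
  have hxT : x ∈ T := Finset.mem_image_of_mem v (Finset.mem_range.2 (Nat.lt_succ_self n))
  set S : Finset Vtx := T.erase x with hS
  have hxS : x ∉ S := Finset.notMem_erase x T
  set G : (Vtx → ℕ → ℝ) → ℝ := fun ω => ∏ y ∈ S, g1 y (ω y) with hG
  have hmG : Measurable G :=
    Finset.measurable_prod _ (fun y _ => (hm1 y).comp (measurable_pi_apply y))
  -- pointwise decomposition of the path products
  have P1 : ∀ ω : Vtx → ℕ → ℝ, ∏ l ∈ range n, ω (v l) (s l) = G ω * g1 x (ω x) := by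
    intro ω
    have hmaps : ∀ l ∈ range n, v l ∈ T := fun l hl =>
      Finset.mem_image_of_mem v (Finset.mem_range.2 (Nat.lt_succ_of_lt (Finset.mem_range.1 hl)))
    have h1 : ∏ y ∈ T, ∏ l ∈ (range n).filter (fun l => v l = y), ω (v l) (s l)
        = ∏ l ∈ range n, ω (v l) (s l) :=
      Finset.prod_fiberwise_of_maps_to hmaps _
    have h2 : ∀ y ∈ T, ∏ l ∈ (range n).filter (fun l => v l = y), ω (v l) (s l) = g1 y (ω y) := by
      intro y _
      exact Finset.prod_congr rfl fun l hl => by rw [(Finset.mem_filter.1 hl).2]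
    rw [← h1, Finset.prod_congr rfl h2, ← Finset.mul_prod_erase T _ hxT, ← hS]
    simp only [hG]
    ring
  have P2 : ∀ ω : Vtx → ℕ → ℝ,
      ∏ l ∈ range (n + 1), ω (v l) (s l) = G ω * g2 x (ω x) := by
    intro ω
    rw [Finset.prod_range_succ, P1 ω, hg2]
    simp only [if_pos rfl, ← hx, if_true]
    ring
  -- a.e. bounds
  have hb1 : ∀ᵐ ω ∂μ, ∀ y, 0 < g1 y (ω y) ∧ g1 y (ω y) ≤ 1 := by
    filter_upwards [hae] with ω h y
    constructor
    · refine Finset.prod_pos fun l hl => ?_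
      rw [← (Finset.mem_filter.1 hl).2]; exact (h l).1
    · refine Finset.prod_le_one (fun l hl => ?_) (fun l hl => ?_)
      · rw [← (Finset.mem_filter.1 hl).2]; exact (h l).1.le
      · rw [← (Finset.mem_filter.1 hl).2]; exact (h l).2
  have hb2 : ∀ᵐ ω ∂μ, 0 < g2 x (ω x) ∧ g2 x (ω x) ≤ 1 := by
    filter_upwards [hae, hb1] with ω h h1
    have hxn : 0 < ω x (s n) ∧ ω x (s n) ≤ 1 := by rw [hx]; exact h n
    rw [hg2]; simp only [if_pos rfl]
    exact ⟨mul_pos hxn.1 (h1 x).1,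
      mul_le_one₀ hxn.2 (h1 x).1.le (h1 x).2⟩
  have hbG : ∀ᵐ ω ∂μ, 0 < G ω ∧ G ω ≤ 1 := by
    filter_upwards [hb1] with ω h
    exact ⟨Finset.prod_pos fun y _ => (h y).1,
      Finset.prod_le_one (fun y _ => (h y).1.le) (fun y _ => (h y).2)⟩
  -- integrability
  have hint : ∀ f : (Vtx → ℕ → ℝ) → ℝ, Measurable f →
      (∀ᵐ ω ∂μ, 0 < f ω ∧ f ω ≤ 1) → Integrable f μ := by
    intro f hf hb
    refine (integrable_const (1 : ℝ)).mono' hf.aestronglyMeasurable ?_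
    filter_upwards [hb] with ω h
    rw [Real.norm_eq_abs, abs_of_pos h.1]; exact h.2
  have intG : Integrable G μ := hint G hmG hbG
  have int1x : Integrable (fun ω => g1 x (ω x)) μ :=
    hint _ ((hm1 x).comp (measurable_pi_apply x)) (by filter_upwards [hb1] with ω h using h x)
  have int2x : Integrable (fun ω => g2 x (ω x)) μ :=
    hint _ ((hm2 x).comp (measurable_pi_apply x)) hb2
  -- independence
  have hindep1 : ProbabilityTheory.iIndepFun
      (fun y (ω : Vtx → ℕ → ℝ) => g1 y (ω y)) μ := hindep.comp g1 hm1
  have hindep2 : ProbabilityTheory.iIndepFun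
      (fun y (ω : Vtx → ℕ → ℝ) => g2 y (ω y)) μ := hindep.comp g2 hm2
  have ind1 := hindep1.indepFun_finset_prod_of_notMem
    (fun y => (hm1 y).comp (measurable_pi_apply y)) hxS
  have ind2 := hindep2.indepFun_finset_prod_of_notMem
    (fun y => (hm2 y).comp (measurable_pi_apply y)) hxS
  have hSprod1 : (∏ y ∈ S, fun ω : Vtx → ℕ → ℝ => g1 y (ω y)) = G := by
    ext ω; rw [Finset.prod_apply, hG]
  have hSprod2 : (∏ y ∈ S, fun ω : Vtx → ℕ → ℝ => g2 y (ω y)) = G := by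
    ext ω
    rw [Finset.prod_apply, hG]
    refine Finset.prod_congr rfl fun y hy => ?_
    rw [hg2]; simp only [if_neg (Finset.ne_of_mem_erase hy)]
  rw [hSprod1] at ind1
  rw [hSprod2] at ind2
  have hg2x : (fun ω : Vtx → ℕ → ℝ => g2 x (ω x)) = fun ω => g2 x (ω x) := rfl
  -- the two annealed integrals factorize
  have hIn : ∫ ω, ∏ l ∈ range n, ω (v l) (s l) ∂μ
      = (∫ ω, G ω ∂μ) * ∫ ω, g1 x (ω x) ∂μ := by
    have h := ProbabilityTheory.IndepFun.integral_mul_eq_mul_integral ind1 intG.aestronglyMeasurable int1x.aestronglyMeasurable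
    calc ∫ ω, ∏ l ∈ range n, ω (v l) (s l) ∂μ
        = ∫ ω, (G * fun ω' : Vtx → ℕ → ℝ => g1 x (ω' x)) ω ∂μ :=
          integral_congr_ae (Filter.Eventually.of_forall fun ω => by
            simpa using P1 ω)
      _ = _ := h
  have hIsucc : ∫ ω, ∏ l ∈ range (n + 1), ω (v l) (s l) ∂μ
      = (∫ ω, G ω ∂μ) * ∫ ω, g2 x (ω x) ∂μ := by
    have h := ProbabilityTheory.IndepFun.integral_mul_eq_mul_integral ind2 intG.aestronglyMeasurable int2x.aestronglyMeasurable
    calc ∫ ω, ∏ l ∈ range (n + 1), ω (v l) (s l) ∂μ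
        = ∫ ω, (G * fun ω' : Vtx → ℕ → ℝ => g2 x (ω' x)) ω ∂μ :=
          integral_congr_ae (Filter.Eventually.of_forall fun ω => by
            simpa using P2 ω)
      _ = _ := h
  -- positivity of the common factor
  have hGpos : 0 < ∫ ω, G ω ∂μ := by
    rw [integral_pos_iff_support_of_nonneg_ae
      (by filter_upwards [hbG] with ω h using h.1.le) intG]
    have hμs : μ (Function.support G) = 1 := by
      rw [← measure_univ (μ := μ)]
      refine measure_congr (Filter.eventuallyEq_univ.2 ?_)
      filter_upwards [hbG] with ω h using ne_of_gt h.1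
    rw [hμs]; exact one_pos
  -- counting identity
  have hcount : ∀ ρ : ℕ → ℝ,
      ∏ j ∈ range (d x), ρ j ^ ((range n).filter (fun l => v l = x ∧ s l = j)).card
        = g1 x ρ := by
    intro ρ
    have hmaps : ∀ l ∈ (range n).filter (fun l => v l = x), s l ∈ range (d x) := by
      intro l hl
      rw [Finset.mem_range, ← (Finset.mem_filter.1 hl).2]
      exact hs l
    have hfib : ∀ j, ∏ l ∈ ((range n).filter (fun l => v l = x)).filter (fun l => s l = j),
        ρ (s l) = ρ j ^ ((range n).filter (fun l => v l = x ∧ s l = j)).card := by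
      intro j
      rw [Finset.filter_filter]
      rw [show ∏ l ∈ (range n).filter (fun l => v l = x ∧ s l = j), ρ (s l)
          = ∏ _l ∈ (range n).filter (fun l => v l = x ∧ s l = j), ρ j from
        Finset.prod_congr rfl fun l hl => by rw [(Finset.mem_filter.1 hl).2.2]]
      exact Finset.prod_const _
    rw [hg1]
    dsimp only
    rw [← Finset.prod_fiberwise_of_maps_to hmaps (fun l => ρ (s l))]
    exact Finset.prod_congr rfl fun j _ => (hfib j).symm
  -- rewrite the right-hand integrals via the image measure
  have hden : (∫ ρ, ∏ j ∈ range (d x),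
      ρ j ^ ((range n).filter (fun l => v l = x ∧ s l = j)).card ∂(μx x))
      = ∫ ω, g1 x (ω x) ∂μ := by
    rw [hμx x, integral_map (measurable_pi_apply x).aemeasurable
      (Finset.measurable_prod _ (fun j _ => (measurable_pi_apply j).pow_const _)).aestronglyMeasurable]
    exact integral_congr_ae (Filter.Eventually.of_forall fun ω => hcount (ω x))
  have hnum : (∫ ρ, ρ (s n) * ∏ j ∈ range (d x),
      ρ j ^ ((range n).filter (fun l => v l = x ∧ s l = j)).card ∂(μx x))
      = ∫ ω, g2 x (ω x) ∂μ := by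
    rw [hμx x, integral_map (measurable_pi_apply x).aemeasurable
      ((measurable_pi_apply (s n)).mul
        (Finset.measurable_prod _ (fun j _ => (measurable_pi_apply j).pow_const _))).aestronglyMeasurable]
    refine integral_congr_ae (Filter.Eventually.of_forall fun ω => ?_)
    dsimp only
    rw [hcount (ω x), hg2]
    simp only [if_pos rfl, if_true]
  rw [hIn, hIsucc, hnum, hden, mul_div_mul_left _ _ (ne_of_gt hGpos)]
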